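/- Let h : ℝ → ℝ be twice differentiable with h(0) = h'(0) = 0 and c₁ ≤ h''(x) ≤ c₂ for all x, with c₂ ≥ c₁ > 0. Then for every even integer p > 0 and all real x, Δ: (8c₂)^(−2p)·c₁^(3p)·(x^(2p−2)Δ² + Δ^(2p)) ≤ h(x+Δ)^p − (h(x)^p + p·h(x)^(p−1)·h'(x)·Δ) ≤ (16c₂)^p·(x^(2p−2)Δ² + Δ^(2p)). -/

import Mathlib

private lemma tay_low (φ φ' φ'' : ℝ → ℝ) (hφ : ∀ t, HasDerivAt φ (φ' t) t)
    (hφ' : ∀ t, HasDerivAt φ' (φ'' t) t) (a b m : ℝ)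
    (hm : ∀ t ∈ Set.uIcc a b, m ≤ φ'' t) :
    m/2*(b-a)^2 ≤ φ b - φ a - φ' a * (b - a) := by
  set ψ' : ℝ → ℝ := fun t => φ' t - φ' a - m*(t-a) with hψ'def
  set ψ : ℝ → ℝ := fun t => φ t - φ' a * t - m/2*(t-a)^2 with hψdef
  have hψd : ∀ t, HasDerivAt ψ (ψ' t) t := by
    intro t
    have h1 : HasDerivAt (fun t : ℝ => φ' a * t) (φ' a) t := by
      simpa using (hasDerivAt_id t).const_mul (φ' a)
    have h2 : HasDerivAt (fun t : ℝ => m/2*(t-a)^2) (m*(t-a)) t := by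
      have := (((hasDerivAt_id t).sub_const a).pow 2).const_mul (m/2)
      refine this.congr_deriv ?_
      push_cast
      simp only [id_eq]
      ring
    have := ((hφ t).sub h1).sub h2
    exact this
  have hψ'd : ∀ t, HasDerivAt ψ' (φ'' t - m) t := by
    intro t
    have h2 : HasDerivAt (fun t : ℝ => m*(t-a)) m t := by
      simpa using ((hasDerivAt_id t).sub_const a).const_mul m
    exact ((hφ' t).sub_const (φ' a)).sub h2
  have hψ'a : ψ' a = 0 := by simp [hψ'def]
  have hmono' : MonotoneOn ψ' (Set.uIcc a b) := by
    apply monotoneOn_of_deriv_nonneg (convex_uIcc a b)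
    · exact fun t _ => (hψ'd t).continuousAt.continuousWithinAt
    · exact fun t _ => ((hψ'd t).differentiableAt).differentiableWithinAt
    · intro t ht
      rw [(hψ'd t).deriv]
      have := hm t (interior_subset ht)
      linarith
  rcases le_total a b with hab | hab
  · rw [Set.uIcc_of_le hab] at hmono' hm
    have hnn : ∀ t ∈ Set.Icc a b, 0 ≤ ψ' t := by
      intro t ht
      have := hmono' (Set.left_mem_Icc.2 hab) ht ht.1
      rw [hψ'a] at this; exact this
    have hmono : MonotoneOn ψ (Set.Icc a b) := by
      apply monotoneOn_of_deriv_nonneg (convex_Icc a b)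
      · exact fun t _ => (hψd t).continuousAt.continuousWithinAt
      · exact fun t _ => ((hψd t).differentiableAt).differentiableWithinAt
      · intro t ht
        rw [(hψd t).deriv]
        exact hnn t (interior_subset ht)
    have := hmono (Set.left_mem_Icc.2 hab) (Set.right_mem_Icc.2 hab) hab
    simp only [hψdef] at this
    nlinarith [this]
  · rw [Set.uIcc_of_ge hab] at hmono' hm
    have hnp : ∀ t ∈ Set.Icc b a, ψ' t ≤ 0 := by
      intro t ht
      have := hmono' ht (Set.right_mem_Icc.2 hab) ht.2
      rw [hψ'a] at this; exact this
    have hmono : AntitoneOn ψ (Set.Icc b a) := by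
      apply antitoneOn_of_deriv_nonpos (convex_Icc b a)
      · exact fun t _ => (hψd t).continuousAt.continuousWithinAt
      · exact fun t _ => ((hψd t).differentiableAt).differentiableWithinAt
      · intro t ht
        rw [(hψd t).deriv]
        exact hnp t (interior_subset ht)
    have := hmono (Set.left_mem_Icc.2 hab) (Set.right_mem_Icc.2 hab) hab
    simp only [hψdef] at this
    nlinarith [this]

private lemma tay_up (φ φ' φ'' : ℝ → ℝ) (hφ : ∀ t, HasDerivAt φ (φ' t) t)
    (hφ' : ∀ t, HasDerivAt φ' (φ'' t) t) (a b M : ℝ)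
    (hm : ∀ t ∈ Set.uIcc a b, φ'' t ≤ M) :
    φ b - φ a - φ' a * (b - a) ≤ M/2*(b-a)^2 := by
  have := tay_low (fun t => -φ t) (fun t => -φ' t) (fun t => -φ'' t)
    (fun t => (hφ t).neg) (fun t => (hφ' t).neg) a b (-M)
    (fun t ht => neg_le_neg (hm t ht))
  nlinarith [this]

private lemma mono_of (φ φ' : ℝ → ℝ) (hφ : ∀ t, HasDerivAt φ (φ' t) t)
    (h : ∀ t, 0 ≤ φ' t) : Monotone φ :=
  monotone_of_deriv_nonneg (fun t => (hφ t).differentiableAt)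
    (fun t => by rw [(hφ t).deriv]; exact h t)

private lemma chain (φ φ' φ'' : ℝ → ℝ) (hφ : ∀ t, HasDerivAt φ (φ' t) t)
    (hφ' : ∀ t, HasDerivAt φ' (φ'' t) t) (hconv : ∀ t, 0 ≤ φ'' t)
    (Δ α β m : ℝ)
    (hord : (0 ≤ α ∧ α ≤ β ∧ β ≤ Δ) ∨ (Δ ≤ β ∧ β ≤ α ∧ α ≤ 0))
    (hm : ∀ t ∈ Set.uIcc α β, m ≤ φ'' t) :
    m/2*(β-α)^2 ≤ φ Δ - φ 0 - φ' 0 * Δ := by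
  have D1 : 0 ≤ φ Δ - φ β - φ' β * (Δ - β) := by
    have := tay_low φ φ' φ'' hφ hφ' β Δ 0 (fun t _ => hconv t)
    nlinarith [this]
  have D2 := tay_low φ φ' φ'' hφ hφ' α β m hm
  have D3 : 0 ≤ φ α - φ 0 - φ' 0 * (α - 0) := by
    have := tay_low φ φ' φ'' hφ hφ' 0 α 0 (fun t _ => hconv t)
    nlinarith [this]
  have hmono : Monotone φ' := mono_of φ' φ'' hφ' hconv
  have C1 : 0 ≤ (φ' β - φ' 0) * (Δ - β) := by
    rcases hord with ⟨h1, h2, h3⟩ | ⟨h1, h2, h3⟩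
    · have := hmono (le_trans h1 h2 : (0:ℝ) ≤ β)
      exact mul_nonneg (by linarith) (by linarith)
    · have := hmono (le_trans h2 h3 : β ≤ 0)
      exact mul_nonneg_of_nonpos_of_nonpos (by linarith) (by linarith)
  have C2 : 0 ≤ (φ' α - φ' 0) * (β - α) := by
    rcases hord with ⟨h1, h2, h3⟩ | ⟨h1, h2, h3⟩
    · have := hmono h1
      exact mul_nonneg (by linarith) (by linarith)
    · have := hmono h3
      exact mul_nonneg_of_nonpos_of_nonpos (by linarith) (by linarith)
  have key : φ Δ - φ 0 - φ' 0 * Δ =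
      (φ Δ - φ β - φ' β * (Δ - β)) + (φ β - φ α - φ' α * (β - α)) +
      (φ α - φ 0 - φ' 0 * (α - 0)) + (φ' β - φ' 0) * (Δ - β) +
      (φ' α - φ' 0) * (β - α) := by ring
  linarith [D1, D2, D3, C1, C2, key.ge, key.le]

private lemma sq_bounds (a b : ℝ) (h : a^2 ≤ b^2) (hb : 0 ≤ b) : -b ≤ a ∧ a ≤ b := by
  have h1 : |a| ≤ b := by
    apply le_of_pow_le_pow_left₀ two_ne_zero hb
    rw [sq_abs]; exact h
  exact abs_le.1 h1

private lemma add_pow_le' (a b : ℝ) (ha : 0 ≤ a) (hb : 0 ≤ b) (n : ℕ) :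
    (a+b)^(n+1) ≤ 2^n*(a^(n+1)+b^(n+1)) := by
  induction n with
  | zero => simp
  | succ n ih =>
    have key : a^(n+1)*b + a*b^(n+1) ≤ a^(n+2) + b^(n+2) := by
      rw [pow_succ a (n+1), pow_succ b (n+1)]
      rcases le_total a b with hab | hab
      · have h1 : 0 ≤ (b^(n+1) - a^(n+1)) * (b - a) :=
          mul_nonneg (sub_nonneg.2 (pow_le_pow_left₀ ha hab (n+1))) (sub_nonneg.2 hab)
        nlinarith [h1]
      · have h1 : 0 ≤ (a^(n+1) - b^(n+1)) * (a - b) :=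
          mul_nonneg (sub_nonneg.2 (pow_le_pow_left₀ hb hab (n+1))) (sub_nonneg.2 hab)
        nlinarith [h1]
    calc (a+b)^(n+1+1) = (a+b)^(n+1)*(a+b) := pow_succ _ _
      _ ≤ (2^n*(a^(n+1)+b^(n+1)))*(a+b) :=
          mul_le_mul_of_nonneg_right ih (by positivity)
      _ = 2^n*((a^(n+2) + b^(n+2)) + (a^(n+1)*b + a*b^(n+1))) := by ring
      _ ≤ 2^n*((a^(n+2) + b^(n+2)) + (a^(n+2) + b^(n+2))) := by
          apply mul_le_mul_of_nonneg_left _ (by positivity)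
          linarith
      _ = 2^(n+1)*(a^(n+1+1)+b^(n+1+1)) := by ring

private lemma final_comp (A B C D E : ℝ) (n : ℕ) (hA : 0 ≤ A) (hB : 0 ≤ B) (hE : 0 ≤ E)
    (hAC : A ≤ C) (hBD : B ≤ D) : A*B^n*E ≤ C*D^n*E := by
  have h1 : B^n ≤ D^n := pow_le_pow_left₀ hB hBD n
  have h2 : A*B^n ≤ C*D^n := mul_le_mul hAC h1 (pow_nonneg hB n) (le_trans hA hAC)
  exact mul_le_mul_of_nonneg_right h2 hE

set_option maxHeartbeats 1600000 in
theorem stmt_6 (h : ℝ → ℝ) (c₁ c₂ : ℝ) (hc₁ : 0 < c₁) (hc : c₁ ≤ c₂)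
    (hd : ∀ x, DifferentiableAt ℝ h x) (hd2 : ∀ x, DifferentiableAt ℝ (deriv h) x)
    (h0 : h 0 = 0) (h0' : deriv h 0 = 0)
    (hbound : ∀ x, c₁ ≤ deriv (deriv h) x ∧ deriv (deriv h) x ≤ c₂) :
    ∀ (p : ℕ), Even p → 0 < p → ∀ x Δ : ℝ,
      c₁^(3*p) / (8*c₂)^(2*p) * (x^(2*p-2) * Δ^2 + Δ^(2*p)) ≤
        (h (x+Δ))^p - ((h x)^p + p * (h x)^(p-1) * deriv h x * Δ) ∧
      (h (x+Δ))^p - ((h x)^p + p * (h x)^(p-1) * deriv h x * Δ) ≤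
        (16*c₂)^p * (x^(2*p-2) * Δ^2 + Δ^(2*p)) := by
  intro p hpe hpp x Δ
  obtain ⟨q, rfl⟩ : ∃ q, p = q + 2 := ⟨p - 2, by rcases hpe with ⟨k, rfl⟩; omega⟩
  clear hpe hpp
  have hc₂ : 0 < c₂ := lt_of_lt_of_le hc₁ hc
  have hdh : ∀ y, HasDerivAt h (deriv h y) y := fun y => (hd y).hasDerivAt
  have hdh2 : ∀ y, HasDerivAt (deriv h) (deriv (deriv h) y) y := fun y => (hd2 y).hasDerivAt
  -- pointwise bounds on h
  have Hlow : ∀ y : ℝ, c₁/2*y^2 ≤ h y := by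
    intro y
    have := tay_low h (deriv h) (deriv (deriv h)) hdh hdh2 0 y c₁ (fun t _ => (hbound t).1)
    rw [h0, h0'] at this
    nlinarith [this]
  have Hupp : ∀ y : ℝ, h y ≤ c₂/2*y^2 := by
    intro y
    have := tay_up h (deriv h) (deriv (deriv h)) hdh hdh2 0 y c₂ (fun t _ => (hbound t).2)
    rw [h0, h0'] at this
    nlinarith [this]
  have Hnn : ∀ y : ℝ, 0 ≤ h y := by
    intro y
    have := Hlow y
    nlinarith [sq_nonneg y]
  -- bounds on deriv h
  have m1 : Monotone (fun y => deriv h y - c₁*y) := by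
    apply mono_of _ (fun y => deriv (deriv h) y - c₁)
    · intro y
      exact (hdh2 y).sub (by simpa using (hasDerivAt_id y).const_mul c₁)
    · intro y
      have := (hbound y).1; linarith
  have m2 : Monotone (fun y => c₂*y - deriv h y) := by
    apply mono_of _ (fun y => c₂ - deriv (deriv h) y)
    · intro y
      exact (by simpa using (hasDerivAt_id y).const_mul c₂ : HasDerivAt (fun y : ℝ => c₂*y) c₂ y).sub (hdh2 y)
    · intro y
      have := (hbound y).2; linarith
  have Hd1 : ∀ y : ℝ, c₁^2*y^2 ≤ (deriv h y)^2 := by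
    intro y
    rcases le_total 0 y with hy | hy
    · have a1 := m1 hy
      have a2 := m2 hy
      simp only [h0', mul_zero, sub_zero, zero_sub] at a1 a2
      nlinarith [a1, a2, mul_nonneg hc₁.le hy]
    · have a1 := m1 hy
      have a2 := m2 hy
      simp only [h0', mul_zero, sub_zero, zero_sub] at a1 a2
      nlinarith [a1, a2, mul_nonpos_of_nonneg_of_nonpos hc₁.le hy]
  have Hd2 : ∀ y : ℝ, (deriv h y)^2 ≤ c₂^2*y^2 := by
    intro y
    rcases le_total 0 y with hy | hy
    · have a1 := m1 hy
      have a2 := m2 hy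
      simp only [h0', mul_zero, sub_zero, zero_sub] at a1 a2
      nlinarith [a1, a2, mul_nonneg hc₁.le hy]
    · have a1 := m1 hy
      have a2 := m2 hy
      simp only [h0', mul_zero, sub_zero, zero_sub] at a1 a2
      nlinarith [a1, a2, mul_nonpos_of_nonneg_of_nonpos hc₁.le hy]
  -- the composite function and its derivatives
  set G : ℝ → ℝ := fun t => (h (x+t))^(q+2) with hGdef
  set Gd : ℝ → ℝ := fun t => ((q:ℝ)+2) * ((h (x+t))^(q+1) * deriv h (x+t)) with hGddef
  set Gdd : ℝ → ℝ := fun t =>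
      ((q:ℝ)+2)*((q:ℝ)+1)*((h (x+t))^q*(deriv h (x+t))^2) +
      ((q:ℝ)+2)*((h (x+t))^(q+1)*(deriv (deriv h) (x+t))) with hGdddef
  have hxt : ∀ t : ℝ, HasDerivAt (fun t => h (x+t)) (deriv h (x+t)) t := by
    intro t
    have h1 : HasDerivAt (fun t : ℝ => x + t) 1 t := by
      simpa using (hasDerivAt_id t).const_add x
    simpa [Function.comp_def] using (hdh (x+t)).comp t h1
  have hxt2 : ∀ t : ℝ, HasDerivAt (fun t => deriv h (x+t)) (deriv (deriv h) (x+t)) t := by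
    intro t
    have h1 : HasDerivAt (fun t : ℝ => x + t) 1 t := by
      simpa using (hasDerivAt_id t).const_add x
    simpa [Function.comp_def] using (hdh2 (x+t)).comp t h1
  have hG : ∀ t : ℝ, HasDerivAt G (Gd t) t := by
    intro t
    have := (hxt t).pow (q+2)
    refine this.congr_deriv ?_
    push_cast
    simp only [hGddef]
    ring
  have hGd : ∀ t : ℝ, HasDerivAt Gd (Gdd t) t := by
    intro t
    have h1 : HasDerivAt (fun t : ℝ => (h (x+t))^(q+1))
        ((((q:ℕ)+1 : ℕ):ℝ) * (h (x+t))^q * deriv h (x+t)) t := (hxt t).pow (q+1)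
    have := (h1.mul (hxt2 t)).const_mul ((q:ℝ)+2)
    refine this.congr_deriv ?_
    simp only [hGdddef]
    push_cast
    ring
  have hconv : ∀ t : ℝ, 0 ≤ Gdd t := by
    intro t
    have hb1 := (hbound (x+t)).1
    apply add_nonneg
    · apply mul_nonneg (by positivity)
      exact mul_nonneg (pow_nonneg (Hnn _) _) (sq_nonneg _)
    · apply mul_nonneg (by positivity)
      exact mul_nonneg (pow_nonneg (Hnn _) _) (by linarith)
  -- lower bound on Gdd
  have hGdd_low : ∀ t : ℝ, 8*(c₁/2)^(q+2) * ((x+t)^2)^(q+1) ≤ Gdd t := by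
    intro t
    have e1 : (c₁/2*(x+t)^2)^q ≤ (h (x+t))^q :=
      pow_le_pow_left₀ (by positivity) (Hlow (x+t)) q
    have e2 : c₁^2*(x+t)^2 ≤ (deriv h (x+t))^2 := Hd1 (x+t)
    have prod : (c₁/2*(x+t)^2)^q*(c₁^2*(x+t)^2) ≤ (h (x+t))^q*(deriv h (x+t))^2 :=
      mul_le_mul e1 e2 (by positivity) (pow_nonneg (Hnn _) q)
    have scaled := mul_le_mul_of_nonneg_left prod
      (show (0:ℝ) ≤ ((q:ℝ)+2)*((q:ℝ)+1) by positivity)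
    have t2 : 0 ≤ ((q:ℝ)+2)*((h (x+t))^(q+1)*(deriv (deriv h) (x+t))) := by
      apply mul_nonneg (by positivity)
      exact mul_nonneg (pow_nonneg (Hnn _) _) (le_trans hc₁.le (hbound (x+t)).1)
    have key : 8*(c₁/2)^(q+2)*((x+t)^2)^(q+1) ≤
        ((q:ℝ)+2)*((q:ℝ)+1)*((c₁/2*(x+t)^2)^q*(c₁^2*(x+t)^2)) := by
      have eq1 : (c₁/2*(x+t)^2)^q*(c₁^2*(x+t)^2) = 4*((c₁/2)^(q+2)*((x+t)^2)^(q+1)) := by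
        rw [mul_pow, pow_succ, pow_succ, pow_succ]
        ring
      rw [eq1]
      have hq : (2:ℝ) ≤ ((q:ℝ)+2)*((q:ℝ)+1) := by nlinarith [Nat.cast_nonneg (α := ℝ) q]
      nlinarith [pow_nonneg (show (0:ℝ) ≤ c₁/2 by positivity) (q+2),
        pow_nonneg (sq_nonneg (x+t)) (q+1),
        mul_nonneg (pow_nonneg (show (0:ℝ) ≤ c₁/2 by positivity) (q+2)) (pow_nonneg (sq_nonneg (x+t)) (q+1))]
    simp only [hGdddef]
    linarith [scaled, key, t2]
  -- upper bound on Gdd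
  have hGdd_up : ∀ t : ℝ, Gdd t ≤ ((q:ℝ)+2)^2*c₂^(q+2) * ((x+t)^2)^(q+1) := by
    intro t
    have hynn := Hnn (x+t)
    have e1 : (h (x+t))^q ≤ (c₂*(x+t)^2)^q := by
      apply pow_le_pow_left₀ hynn
      nlinarith [Hupp (x+t), sq_nonneg (x+t)]
    have e2 : (deriv h (x+t))^2 ≤ c₂^2*(x+t)^2 := Hd2 (x+t)
    have prod : (h (x+t))^q*(deriv h (x+t))^2 ≤ (c₂*(x+t)^2)^q*(c₂^2*(x+t)^2) :=
      mul_le_mul e1 e2 (sq_nonneg _) (by positivity)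
    have e3 : (h (x+t))^(q+1) ≤ (c₂*(x+t)^2)^(q+1) := by
      apply pow_le_pow_left₀ hynn
      nlinarith [Hupp (x+t), sq_nonneg (x+t)]
    have prod2 : (h (x+t))^(q+1)*(deriv (deriv h) (x+t)) ≤ (c₂*(x+t)^2)^(q+1)*c₂ := by
      apply mul_le_mul e3 (hbound (x+t)).2 (le_trans hc₁.le (hbound (x+t)).1) (by positivity)
    have scaled := mul_le_mul_of_nonneg_left prod
      (show (0:ℝ) ≤ ((q:ℝ)+2)*((q:ℝ)+1) by positivity)
    have scaled2 := mul_le_mul_of_nonneg_left prod2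
      (show (0:ℝ) ≤ ((q:ℝ)+2) by positivity)
    have key : ((q:ℝ)+2)*((q:ℝ)+1)*((c₂*(x+t)^2)^q*(c₂^2*(x+t)^2)) +
        ((q:ℝ)+2)*((c₂*(x+t)^2)^(q+1)*c₂) = ((q:ℝ)+2)^2*c₂^(q+2)*((x+t)^2)^(q+1) := by
      rw [mul_pow, mul_pow, pow_succ, pow_succ, pow_succ]
      ring
    simp only [hGdddef]
    linarith [scaled, scaled2, key.le, key.ge]
  -- rewrite the target quantity
  have hmid : G Δ - G 0 - Gd 0 * Δ =
      (h (x+Δ))^(q+2) - ((h x)^(q+2) + ((q:ℕ)+2 : ℕ) * (h x)^(q+2-1) * deriv h x * Δ) := by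
    simp only [hGdef, hGddef, add_zero]
    push_cast
    ring
  have eX : x^(2*(q+2)-2) = (x^2)^(q+1) := by
    rw [show 2*(q+2)-2 = 2*(q+1) from by omega, pow_mul]
  have eD : Δ^(2*(q+2)) = (Δ^2)^(q+1)*Δ^2 := by
    rw [show 2*(q+2) = 2*(q+1)+2 from by omega, pow_add, pow_mul]
  have hK : c₁^(3*(q+2)) / (8*c₂)^(2*(q+2)) ≤ (c₁/64)^(q+2) := by
    rw [div_le_iff₀ (by positivity)]
    calc c₁^(3*(q+2)) = (c₁^3)^(q+2) := pow_mul c₁ 3 (q+2)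
      _ ≤ ((c₁/64)*(8*c₂)^2)^(q+2) := by
          apply pow_le_pow_left₀ (by positivity)
          have hcc : c₁*c₁ ≤ c₂*c₂ := mul_le_mul hc hc hc₁.le (le_trans hc₁.le hc)
          nlinarith [mul_le_mul_of_nonneg_left hcc hc₁.le]
      _ = (c₁/64)^(q+2)*((8*c₂)^2)^(q+2) := mul_pow _ _ _
      _ = (c₁/64)^(q+2)*(8*c₂)^(2*(q+2)) := by rw [← pow_mul]
  constructor
  · -- LOWER BOUND
    rw [← hmid, eX, eD]
    have hKnn : (0:ℝ) ≤ c₁^(3*(q+2)) / (8*c₂)^(2*(q+2)) := by positivity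
    have step0 : c₁^(3*(q+2)) / (8*c₂)^(2*(q+2)) * ((x^2)^(q+1) * Δ^2 + (Δ^2)^(q+1)*Δ^2) ≤
        (c₁/64)^(q+2) * ((x^2)^(q+1) * Δ^2 + (Δ^2)^(q+1)*Δ^2) :=
      mul_le_mul_of_nonneg_right hK (by positivity)
    rcases le_or_gt (Δ^2) (x^2) with hA | hB
    · -- case A : |Δ| ≤ |x|, use interval from 0 to Δ/2
      have hm : ∀ t ∈ Set.uIcc 0 (Δ/2), 8*(c₁/2)^(q+2)*(x^2/4)^(q+1) ≤ Gdd t := by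
        intro t ht
        have ht2 : 4*t^2 ≤ x^2 := by
          rcases Set.mem_uIcc.1 ht with ⟨h1, h2⟩ | ⟨h1, h2⟩ <;> nlinarith [hA]
        have hsq : x^2/4 ≤ (x+t)^2 := by nlinarith [sq_nonneg (x+2*t)]
        calc 8*(c₁/2)^(q+2)*(x^2/4)^(q+1) ≤ 8*(c₁/2)^(q+2)*((x+t)^2)^(q+1) := by
              apply mul_le_mul_of_nonneg_left (pow_le_pow_left₀ (by positivity) hsq _) (by positivity)
          _ ≤ Gdd t := hGdd_low t
      have hord : (0 ≤ (0:ℝ) ∧ (0:ℝ) ≤ Δ/2 ∧ Δ/2 ≤ Δ) ∨ (Δ ≤ Δ/2 ∧ Δ/2 ≤ (0:ℝ) ∧ (0:ℝ) ≤ 0) := by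
        rcases le_total 0 Δ with hΔ | hΔ
        · left; exact ⟨le_refl _, by linarith, by linarith⟩
        · right; exact ⟨by linarith, by linarith, le_refl _⟩
      have hch := chain G Gd Gdd hG hGd hconv Δ 0 (Δ/2) _ hord hm
      have hDX : (Δ^2)^(q+1)*Δ^2 ≤ (x^2)^(q+1)*Δ^2 :=
        mul_le_mul_of_nonneg_right (pow_le_pow_left₀ (sq_nonneg Δ) hA _) (sq_nonneg Δ)
      have step1 : (c₁/64)^(q+2) * ((x^2)^(q+1) * Δ^2 + (Δ^2)^(q+1)*Δ^2) ≤
          (2*(c₁/64)) * ((c₁/64)*x^2)^(q+1) * Δ^2 := by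
        have e1 : (2*(c₁/64)) * ((c₁/64)*x^2)^(q+1) * Δ^2 =
            (c₁/64)^(q+2) * (2*((x^2)^(q+1)*Δ^2)) := by
          rw [mul_pow, pow_succ]
          ring
        rw [e1]
        apply mul_le_mul_of_nonneg_left (by linarith) (by positivity)
      have step2 : (2*(c₁/64)) * ((c₁/64)*x^2)^(q+1) * Δ^2 ≤
          8*(c₁/2)^(q+2)*(x^2/4)^(q+1)/2*(Δ/2-0)^2 := by
        have e2 : 8*(c₁/2)^(q+2)*(x^2/4)^(q+1)/2*(Δ/2-0)^2 =
            (c₁/2) * ((c₁/2)*(x^2/4))^(q+1) * Δ^2 := by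
          rw [mul_pow, pow_succ]
          ring
        rw [e2]
        apply final_comp _ _ _ _ _ _ (by positivity) (by positivity) (sq_nonneg Δ)
          (by linarith) (by nlinarith [sq_nonneg x])
      linarith [step0, step1, step2, hch]
    · rcases le_or_gt (4*x^2) (Δ^2) with hB1 | hB2
      · -- case B1 : |x| ≤ |Δ|/2, use interval from 3Δ/4 to Δ
        have hm : ∀ t ∈ Set.uIcc (3*Δ/4) Δ, 8*(c₁/2)^(q+2)*(Δ^2/16)^(q+1) ≤ Gdd t := by
          intro t ht
          have hsq : Δ^2/16 ≤ (x+t)^2 := by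
            rcases Set.mem_uIcc.1 ht with ⟨h1, h2⟩ | ⟨h1, h2⟩
            · have hΔ : 0 ≤ Δ := by linarith
              obtain ⟨hx1, hx2⟩ := sq_bounds (2*x) Δ (by nlinarith) hΔ
              have : Δ/4 ≤ x + t := by linarith
              nlinarith [this, hΔ]
            · have hΔ : Δ ≤ 0 := by linarith
              obtain ⟨hx1, hx2⟩ := sq_bounds (2*x) (-Δ) (by nlinarith) (by linarith)
              have : x + t ≤ Δ/4 := by linarith
              nlinarith [this, hΔ]
          calc 8*(c₁/2)^(q+2)*(Δ^2/16)^(q+1) ≤ 8*(c₁/2)^(q+2)*((x+t)^2)^(q+1) := by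
                apply mul_le_mul_of_nonneg_left (pow_le_pow_left₀ (by positivity) hsq _) (by positivity)
            _ ≤ Gdd t := hGdd_low t
        have hord : (0 ≤ 3*Δ/4 ∧ 3*Δ/4 ≤ Δ ∧ Δ ≤ Δ) ∨ (Δ ≤ Δ ∧ Δ ≤ 3*Δ/4 ∧ 3*Δ/4 ≤ 0) := by
          rcases le_total 0 Δ with hΔ | hΔ
          · left; exact ⟨by linarith, by linarith, le_refl _⟩
          · right; exact ⟨le_refl _, by linarith, by linarith⟩
        have hch := chain G Gd Gdd hG hGd hconv Δ (3*Δ/4) Δ _ hord hm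
        have hDX : (x^2)^(q+1)*Δ^2 ≤ (Δ^2)^(q+1)*Δ^2 :=
          mul_le_mul_of_nonneg_right (pow_le_pow_left₀ (sq_nonneg x) (by nlinarith) _) (sq_nonneg Δ)
        have step1 : (c₁/64)^(q+2) * ((x^2)^(q+1) * Δ^2 + (Δ^2)^(q+1)*Δ^2) ≤
            (2*(c₁/64)) * ((c₁/64)*Δ^2)^(q+1) * Δ^2 := by
          have e1 : (2*(c₁/64)) * ((c₁/64)*Δ^2)^(q+1) * Δ^2 =
              (c₁/64)^(q+2) * (2*((Δ^2)^(q+1)*Δ^2)) := by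
            rw [mul_pow, pow_succ]
            ring
          rw [e1]
          apply mul_le_mul_of_nonneg_left (by linarith) (by positivity)
        have step2 : (2*(c₁/64)) * ((c₁/64)*Δ^2)^(q+1) * Δ^2 ≤
            8*(c₁/2)^(q+2)*(Δ^2/16)^(q+1)/2*(Δ-3*Δ/4)^2 := by
          have e2 : 8*(c₁/2)^(q+2)*(Δ^2/16)^(q+1)/2*(Δ-3*Δ/4)^2 =
              (c₁/8) * ((c₁/2)*(Δ^2/16))^(q+1) * Δ^2 := by
            rw [mul_pow, pow_succ]
            ring
          rw [e2]
          apply final_comp _ _ _ _ _ _ (by positivity) (by positivity) (sq_nonneg Δ)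
            (by linarith) (by nlinarith [sq_nonneg Δ])
        linarith [step0, step1, step2, hch]
      · -- case B2 : |Δ|/2 < |x| < |Δ|
        rcases le_or_gt 0 (x*Δ) with hs | hs
        · -- same signs
          have hm : ∀ t ∈ Set.uIcc 0 (Δ/2), 8*(c₁/2)^(q+2)*(x^2)^(q+1) ≤ Gdd t := by
            intro t ht
            have hsq : x^2 ≤ (x+t)^2 := by
              rcases Set.mem_uIcc.1 ht with ⟨h1, h2⟩ | ⟨h1, h2⟩
              · rcases le_or_gt 0 x with hx | hx
                · nlinarith [mul_nonneg hx h1]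
                · have hΔ : Δ ≤ 0 := by nlinarith
                  have ht0 : t = 0 := le_antisymm (by linarith) h1
                  rw [ht0]; simp
              · rcases le_or_gt x 0 with hx | hx
                · nlinarith [mul_nonneg_of_nonpos_of_nonpos hx h2]
                · have hΔ : 0 ≤ Δ := by nlinarith
                  have ht0 : t = 0 := le_antisymm h2 (by linarith)
                  rw [ht0]; simp
            calc 8*(c₁/2)^(q+2)*(x^2)^(q+1) ≤ 8*(c₁/2)^(q+2)*((x+t)^2)^(q+1) := by
                  apply mul_le_mul_of_nonneg_left (pow_le_pow_left₀ (sq_nonneg x) hsq _) (by positivity)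
              _ ≤ Gdd t := hGdd_low t
          have hord : (0 ≤ (0:ℝ) ∧ (0:ℝ) ≤ Δ/2 ∧ Δ/2 ≤ Δ) ∨ (Δ ≤ Δ/2 ∧ Δ/2 ≤ (0:ℝ) ∧ (0:ℝ) ≤ 0) := by
            rcases le_total 0 Δ with hΔ | hΔ
            · left; exact ⟨le_refl _, by linarith, by linarith⟩
            · right; exact ⟨by linarith, by linarith, le_refl _⟩
          have hch := chain G Gd Gdd hG hGd hconv Δ 0 (Δ/2) _ hord hm
          have hDX : (x^2)^(q+1)*Δ^2 ≤ (Δ^2)^(q+1)*Δ^2 :=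
            mul_le_mul_of_nonneg_right (pow_le_pow_left₀ (sq_nonneg x) (by nlinarith) _) (sq_nonneg Δ)
          have step1 : (c₁/64)^(q+2) * ((x^2)^(q+1) * Δ^2 + (Δ^2)^(q+1)*Δ^2) ≤
              (2*(c₁/64)) * ((c₁/64)*Δ^2)^(q+1) * Δ^2 := by
            have e1 : (2*(c₁/64)) * ((c₁/64)*Δ^2)^(q+1) * Δ^2 =
                (c₁/64)^(q+2) * (2*((Δ^2)^(q+1)*Δ^2)) := by
              rw [mul_pow, pow_succ]
              ring
            rw [e1]
            apply mul_le_mul_of_nonneg_left (by linarith) (by positivity)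
          have step2 : (2*(c₁/64)) * ((c₁/64)*Δ^2)^(q+1) * Δ^2 ≤
              8*(c₁/2)^(q+2)*(x^2)^(q+1)/2*(Δ/2-0)^2 := by
            have e2 : 8*(c₁/2)^(q+2)*(x^2)^(q+1)/2*(Δ/2-0)^2 =
                (c₁/2) * ((c₁/2)*x^2)^(q+1) * Δ^2 := by
              rw [mul_pow, pow_succ]
              ring
            rw [e2]
            apply final_comp _ _ _ _ _ _ (by positivity) (by positivity) (sq_nonneg Δ)
              (by linarith) (by nlinarith [sq_nonneg x])
          linarith [step0, step1, step2, hch]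
        · -- opposite signs, use interval from 0 to -x/2
          have hm : ∀ t ∈ Set.uIcc 0 (-x/2), 8*(c₁/2)^(q+2)*(x^2/4)^(q+1) ≤ Gdd t := by
            intro t ht
            have ht2 : 4*t^2 ≤ x^2 := by
              rcases Set.mem_uIcc.1 ht with ⟨h1, h2⟩ | ⟨h1, h2⟩ <;> nlinarith
            have hsq : x^2/4 ≤ (x+t)^2 := by nlinarith [sq_nonneg (x+2*t)]
            calc 8*(c₁/2)^(q+2)*(x^2/4)^(q+1) ≤ 8*(c₁/2)^(q+2)*((x+t)^2)^(q+1) := by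
                  apply mul_le_mul_of_nonneg_left (pow_le_pow_left₀ (by positivity) hsq _) (by positivity)
              _ ≤ Gdd t := hGdd_low t
          have hord : (0 ≤ (0:ℝ) ∧ (0:ℝ) ≤ -x/2 ∧ -x/2 ≤ Δ) ∨ (Δ ≤ -x/2 ∧ -x/2 ≤ (0:ℝ) ∧ (0:ℝ) ≤ 0) := by
            rcases le_or_gt 0 Δ with hΔ | hΔ
            · left
              have hx : x < 0 := by nlinarith
              obtain ⟨hx1, hx2⟩ := sq_bounds x Δ (by nlinarith) hΔ
              exact ⟨le_refl _, by linarith, by linarith⟩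
            · right
              have hx : 0 < x := by nlinarith
              obtain ⟨hx1, hx2⟩ := sq_bounds x (-Δ) (by nlinarith) (by linarith)
              exact ⟨by linarith, by linarith, le_refl _⟩
          have hch := chain G Gd Gdd hG hGd hconv Δ 0 (-x/2) _ hord hm
          have hDX : (x^2)^(q+1)*Δ^2 ≤ (Δ^2)^(q+1)*Δ^2 :=
            mul_le_mul_of_nonneg_right (pow_le_pow_left₀ (sq_nonneg x) (by nlinarith) _) (sq_nonneg Δ)
          have hD4 : (Δ^2)^(q+1)*Δ^2 ≤ (4*x^2)^(q+1)*(4*x^2) :=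
            mul_le_mul (pow_le_pow_left₀ (sq_nonneg Δ) (by nlinarith) _) (by nlinarith)
              (sq_nonneg Δ) (by positivity)
          have step1 : (c₁/64)^(q+2) * ((x^2)^(q+1) * Δ^2 + (Δ^2)^(q+1)*Δ^2) ≤
              (8*(c₁/64)) * ((c₁/64)*(4*x^2))^(q+1) * x^2 := by
            have e1 : (8*(c₁/64)) * ((c₁/64)*(4*x^2))^(q+1) * x^2 =
                (c₁/64)^(q+2) * (2*((4*x^2)^(q+1)*(4*x^2))) := by
              rw [mul_pow, pow_succ]
              ring
            rw [e1]
            apply mul_le_mul_of_nonneg_left (by linarith) (by positivity)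
          have step2 : (8*(c₁/64)) * ((c₁/64)*(4*x^2))^(q+1) * x^2 ≤
              8*(c₁/2)^(q+2)*(x^2/4)^(q+1)/2*(-x/2-0)^2 := by
            have e2 : 8*(c₁/2)^(q+2)*(x^2/4)^(q+1)/2*(-x/2-0)^2 =
                (c₁/2) * ((c₁/2)*(x^2/4))^(q+1) * x^2 := by
              rw [mul_pow, pow_succ]
              ring
            rw [e2]
            apply final_comp _ _ _ _ _ _ (by positivity) (by positivity) (sq_nonneg x)
              (by linarith) (by nlinarith [sq_nonneg x])
          linarith [step0, step1, step2, hch]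
  · -- UPPER BOUND
    rw [← hmid, eX, eD]
    have hMb : ∀ t ∈ Set.uIcc 0 Δ, Gdd t ≤ ((q:ℝ)+2)^2*c₂^(q+2)*((|x|+|Δ|)^2)^(q+1) := by
      intro t ht
      have htΔ : -|Δ| ≤ t ∧ t ≤ |Δ| := by
        rcases Set.mem_uIcc.1 ht with ⟨h1, h2⟩ | ⟨h1, h2⟩
        · constructor <;> [linarith [abs_nonneg Δ]; linarith [le_abs_self Δ]]
        · constructor <;> [linarith [neg_abs_le Δ]; linarith [abs_nonneg Δ]]
      have hsq : (x+t)^2 ≤ (|x|+|Δ|)^2 := by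
        apply sq_le_sq'
        · have := neg_abs_le x; linarith [htΔ.1]
        · have := le_abs_self x; linarith [htΔ.2]
      calc Gdd t ≤ ((q:ℝ)+2)^2*c₂^(q+2)*((x+t)^2)^(q+1) := hGdd_up t
        _ ≤ ((q:ℝ)+2)^2*c₂^(q+2)*((|x|+|Δ|)^2)^(q+1) := by
            apply mul_le_mul_of_nonneg_left (pow_le_pow_left₀ (sq_nonneg _) hsq _) (by positivity)
    have hup := tay_up G Gd Gdd hG hGd 0 Δ _ hMb
    simp only [sub_zero] at hup
    have hq2 : ((q:ℝ)+2)^2 ≤ 16*4^q := by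
      have h1 : ((q:ℝ)+2) ≤ 2^(q+2) := by exact_mod_cast (Nat.lt_two_pow_self (n := q+2)).le
      have h2 : ((q:ℝ)+2)^2 ≤ (2^(q+2))^2 := by
        apply pow_le_pow_left₀ (by positivity) h1
      have h3 : ((2:ℝ)^(q+2))^2 = 16*4^q := by
        rw [← pow_mul, show (q+2)*2 = 2*q+4 from by ring, pow_add, pow_mul]
        norm_num
        ring
      linarith [h2, h3.le, h3.ge]
    have habs2 : (|x|+|Δ|)^2 ≤ 2*(x^2+Δ^2) := by
      nlinarith [sq_abs x, sq_abs Δ, sq_nonneg (|x|-|Δ|)]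
    have hpow1 : ((|x|+|Δ|)^2)^(q+1) ≤ (2*(x^2+Δ^2))^(q+1) :=
      pow_le_pow_left₀ (sq_nonneg _) habs2 _
    have hpow2 : (x^2+Δ^2)^(q+1) ≤ 2^q*((x^2)^(q+1)+(Δ^2)^(q+1)) :=
      add_pow_le' _ _ (sq_nonneg x) (sq_nonneg Δ) q
    have hpow3 : ((|x|+|Δ|)^2)^(q+1) ≤ 2^(q+1)*(2^q*((x^2)^(q+1)+(Δ^2)^(q+1))) := by
      calc ((|x|+|Δ|)^2)^(q+1) ≤ (2*(x^2+Δ^2))^(q+1) := hpow1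
        _ = 2^(q+1)*(x^2+Δ^2)^(q+1) := mul_pow _ _ _
        _ ≤ 2^(q+1)*(2^q*((x^2)^(q+1)+(Δ^2)^(q+1))) :=
            mul_le_mul_of_nonneg_left hpow2 (by positivity)
    have hfin : ((q:ℝ)+2)^2*c₂^(q+2)*((|x|+|Δ|)^2)^(q+1)/2*Δ^2 ≤
        (16*c₂)^(q+2) * ((x^2)^(q+1) * Δ^2 + (Δ^2)^(q+1)*Δ^2) := by
      have hS : 0 ≤ (x^2)^(q+1)+(Δ^2)^(q+1) := by positivity
      have c1 : ((q:ℝ)+2)^2*c₂^(q+2)*((|x|+|Δ|)^2)^(q+1) ≤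
          (16*4^q)*c₂^(q+2)*(2^(q+1)*(2^q*((x^2)^(q+1)+(Δ^2)^(q+1)))) := by
        have t1 : ((q:ℝ)+2)^2*c₂^(q+2)*((|x|+|Δ|)^2)^(q+1) ≤
            ((q:ℝ)+2)^2*c₂^(q+2)*(2^(q+1)*(2^q*((x^2)^(q+1)+(Δ^2)^(q+1)))) :=
          mul_le_mul_of_nonneg_left hpow3 (by positivity)
        have t2 : ((q:ℝ)+2)^2*c₂^(q+2) ≤ (16*4^q)*c₂^(q+2) :=
          mul_le_mul_of_nonneg_right hq2 (by positivity)
        have t3 : ((q:ℝ)+2)^2*c₂^(q+2)*(2^(q+1)*(2^q*((x^2)^(q+1)+(Δ^2)^(q+1)))) ≤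
            (16*4^q)*c₂^(q+2)*(2^(q+1)*(2^q*((x^2)^(q+1)+(Δ^2)^(q+1)))) :=
          mul_le_mul_of_nonneg_right t2 (by positivity)
        linarith
      have c2 : ((16:ℝ)*4^q)*c₂^(q+2)*(2^(q+1)*(2^q*((x^2)^(q+1)+(Δ^2)^(q+1))))/2*Δ^2 ≤
          (16*c₂)^(q+2) * ((x^2)^(q+1) * Δ^2 + (Δ^2)^(q+1)*Δ^2) := by
        have e16 : ((16:ℝ)*c₂)^(q+2) = 16^(q+2)*c₂^(q+2) := mul_pow _ _ _
        have e162 : (16:ℝ)^(q+2) = 256*(4^q*4^q) := by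
          rw [show (16:ℝ) = 4^2 from by norm_num, ← pow_mul,
            show 2*(q+2) = q+(q+4) from by ring, pow_add, pow_add]
          ring
        have e2q : (2:ℝ)^(q+1)*2^q = 2*(4:ℝ)^q/2*2 := by
          rw [show (4:ℝ) = 2*2 from by norm_num, mul_pow, pow_succ]
          ring
        have lhs_eq : ((16:ℝ)*4^q)*c₂^(q+2)*(2^(q+1)*(2^q*((x^2)^(q+1)+(Δ^2)^(q+1))))/2*Δ^2 =
            (16*(4^q*4^q))*c₂^(q+2)*(((x^2)^(q+1)+(Δ^2)^(q+1))*Δ^2) := by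
          rw [show (2:ℝ)^(q+1) = 2^q*2 from pow_succ 2 q,
            show (4:ℝ) = 2*2 from by norm_num, mul_pow]
          ring
        rw [lhs_eq, e16, e162]
        have : ((16:ℝ)*(4^q*4^q))*c₂^(q+2) ≤ (256*(4^q*4^q))*c₂^(q+2) := by
          have : (0:ℝ) ≤ 4^q*4^q := by positivity
          nlinarith [pow_nonneg hc₂.le (q+2)]
        have hE : (0:ℝ) ≤ ((x^2)^(q+1)+(Δ^2)^(q+1))*Δ^2 := by positivity
        calc (16*((4:ℝ)^q*4^q))*c₂^(q+2)*(((x^2)^(q+1)+(Δ^2)^(q+1))*Δ^2)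
            ≤ (256*(4^q*4^q))*c₂^(q+2)*(((x^2)^(q+1)+(Δ^2)^(q+1))*Δ^2) :=
              mul_le_mul_of_nonneg_right this hE
          _ = 256*(4^q*4^q)*c₂^(q+2) * ((x^2)^(q+1) * Δ^2 + (Δ^2)^(q+1)*Δ^2) := by ring
      have hmul : ((q:ℝ)+2)^2*c₂^(q+2)*((|x|+|Δ|)^2)^(q+1)/2*Δ^2 ≤
          ((16:ℝ)*4^q)*c₂^(q+2)*(2^(q+1)*(2^q*((x^2)^(q+1)+(Δ^2)^(q+1))))/2*Δ^2 := by
        have := mul_le_mul_of_nonneg_right c1 (sq_nonneg Δ)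
        linarith [this]
      linarith [hmul, c2]
    calc G Δ - G 0 - Gd 0 * Δ ≤
        ((q:ℝ)+2)^2*c₂^(q+2)*((|x|+|Δ|)^2)^(q+1)/2*Δ^2 := hup
      _ ≤ (16*c₂)^(q+2) * ((x^2)^(q+1) * Δ^2 + (Δ^2)^(q+1)*Δ^2) := hfin
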